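/- Φ_R(A) is the nearest point to A in the convex set {τ ∈ S_d : |τ^D| ≤ R}: for all R ≥ 0, A ∈ S_d, and all B ∈ S_d with |B^D| ≤ R, one has |Φ_R(A) - A| ≤ |B - A|. -/

import Mathlib

open Matrix BigOperators

/-- Frobenius inner product on d×d real matrices. -/
noncomputable def finner {d : ℕ} (A B : Matrix (Fin d) (Fin d) ℝ) : ℝ :=
  ∑ i, ∑ j, A i j * B i j

/-- Frobenius norm. -/
noncomputable def fnorm {d : ℕ} (A : Matrix (Fin d) (Fin d) ℝ) : ℝ :=
  Real.sqrt (finner A A)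

/-- Deviatoric part: A - (tr A / d) • I. -/
noncomputable def dev {d : ℕ} (A : Matrix (Fin d) (Fin d) ℝ) : Matrix (Fin d) (Fin d) ℝ :=
  A - (A.trace / (d : ℝ)) • (1 : Matrix (Fin d) (Fin d) ℝ)

/-- Pointwise projection onto {|τ^D| ≤ R}. -/
noncomputable def Phi {d : ℕ} (R : ℝ) (A : Matrix (Fin d) (Fin d) ℝ) :
    Matrix (Fin d) (Fin d) ℝ :=
  if fnorm (dev A) ≤ R then A
  else (A.trace / (d : ℝ)) • (1 : Matrix (Fin d) (Fin d) ℝ) + (R / fnorm (dev A)) • dev A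

/-- Embed a matrix into Euclidean space on index pairs. -/
noncomputable def eMat {d : ℕ} (M : Matrix (Fin d) (Fin d) ℝ) :
    EuclideanSpace ℝ (Fin d × Fin d) := WithLp.toLp 2 (fun p : Fin d × Fin d => M p.1 p.2)

lemma finner_eq_inner {d : ℕ} (A B : Matrix (Fin d) (Fin d) ℝ) :
    finner A B = inner ℝ (eMat A) (eMat B) := by
  simp [finner, eMat, PiLp.inner_apply, RCLike.inner_apply, Fintype.sum_prod_type,
    mul_comm]

lemma fnorm_eq_norm {d : ℕ} (M : Matrix (Fin d) (Fin d) ℝ) :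
    fnorm M = ‖eMat M‖ := by
  rw [fnorm, finner_eq_inner, real_inner_self_eq_norm_sq]
  exact Real.sqrt_sq (norm_nonneg _)

lemma eMat_sub {d : ℕ} (A B : Matrix (Fin d) (Fin d) ℝ) :
    eMat (A - B) = eMat A - eMat B := rfl

lemma eMat_smul {d : ℕ} (c : ℝ) (A : Matrix (Fin d) (Fin d) ℝ) :
    eMat (c • A) = c • eMat A := rfl

lemma fnorm_nonneg {d : ℕ} (M : Matrix (Fin d) (Fin d) ℝ) : 0 ≤ fnorm M :=
  Real.sqrt_nonneg _

lemma fnorm_smul {d : ℕ} (c : ℝ) (M : Matrix (Fin d) (Fin d) ℝ) :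
    fnorm (c • M) = |c| * fnorm M := by
  rw [fnorm_eq_norm, eMat_smul, norm_smul, fnorm_eq_norm, Real.norm_eq_abs]

lemma trace_dev {d : ℕ} (hd : d ≠ 0) (A : Matrix (Fin d) (Fin d) ℝ) :
    (dev A).trace = 0 := by
  simp [dev, Matrix.trace_sub, Matrix.trace_smul, Matrix.trace_one]
  field_simp
  ring

lemma inner_dev_id {d : ℕ} (M : Matrix (Fin d) (Fin d) ℝ) (c : ℝ)
    (hM : M.trace = 0) :
    inner ℝ (eMat M) (eMat (c • (1 : Matrix (Fin d) (Fin d) ℝ))) = (0 : ℝ) := by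
  have : inner ℝ (eMat M) (eMat (c • (1 : Matrix (Fin d) (Fin d) ℝ)))
      = c * M.trace := by
    rw [← finner_eq_inner]
    simp [← finner_eq_inner, finner, eMat, Matrix.one_apply, mul_ite, Matrix.trace,
      Matrix.diag, Finset.mul_sum, mul_comm]
  rw [this, hM, mul_zero]

/-- The deviatoric part has smaller Frobenius norm. -/
lemma fnorm_dev_le {d : ℕ} (hd : d ≠ 0) (M : Matrix (Fin d) (Fin d) ℝ) :
    fnorm (dev M) ≤ fnorm M := by
  set c : ℝ := M.trace / (d : ℝ)
  have hM : M = dev M + c • (1 : Matrix (Fin d) (Fin d) ℝ) := by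
    simp [dev, c]
  have hperp : inner ℝ (eMat (dev M)) (eMat (c • (1 : Matrix (Fin d) (Fin d) ℝ)))
      = (0 : ℝ) := inner_dev_id _ _ (trace_dev hd M)
  rw [fnorm_eq_norm, fnorm_eq_norm]
  have hEM : eMat M = eMat (dev M) + eMat (c • (1 : Matrix (Fin d) (Fin d) ℝ)) :=
    congrArg eMat hM
  rw [hEM]
  have := norm_add_sq_real (eMat (dev M)) (eMat (c • (1 : Matrix (Fin d) (Fin d) ℝ)))
  nlinarith [norm_nonneg (eMat (dev M)),
    norm_nonneg (eMat (dev M) + eMat (c • (1 : Matrix (Fin d) (Fin d) ℝ))),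
    sq_nonneg (‖eMat (c • (1 : Matrix (Fin d) (Fin d) ℝ))‖)]

lemma dev_sub {d : ℕ} (A B : Matrix (Fin d) (Fin d) ℝ) :
    dev (A - B) = dev A - dev B := by
  simp only [dev, Matrix.trace_sub, sub_div, sub_smul]
  abel

/-- Φ_R(A) is nearest to A in {|τ^D| ≤ R}. -/
theorem Phi_nearest_point {d : ℕ} (hd : 2 ≤ d) (R : ℝ) (hR : 0 ≤ R)
    (A B : Matrix (Fin d) (Fin d) ℝ) (hA : A.IsSymm) (hB : B.IsSymm)
    (hBD : fnorm (dev B) ≤ R) :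
    fnorm (Phi R A - A) ≤ fnorm (B - A) := by
  have hd0 : d ≠ 0 := by omega
  by_cases h : fnorm (dev A) ≤ R
  · rw [Phi, if_pos h, sub_self]
    have : fnorm (0 : Matrix (Fin d) (Fin d) ℝ) = 0 := by
      simp [fnorm, finner]
    rw [this]; exact fnorm_nonneg _
  · rw [Phi, if_neg h]
    set n : ℝ := fnorm (dev A) with hn
    have hnpos : 0 < n := lt_of_le_of_lt hR (not_le.mp h)
    have hdecomp : (A.trace / (d : ℝ)) • (1 : Matrix (Fin d) (Fin d) ℝ)
        + (R / n) • dev A - A = (R / n - 1) • dev A := by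
      rw [sub_smul, one_smul, dev]
      abel
    rw [hdecomp, fnorm_smul]
    have habs : |R / n - 1| = 1 - R / n := by
      rw [abs_of_nonpos]
      · ring
      · have : R / n < 1 := (div_lt_one hnpos).mpr (not_le.mp h)
        linarith
    rw [habs]
    have hL : (1 - R / n) * n = n - R := by field_simp
    rw [hL]
    -- RHS chain
    have h1 : fnorm (dev (B - A)) ≤ fnorm (B - A) := fnorm_dev_le hd0 _
    have h2 : fnorm (dev B - dev A) = fnorm (dev (B - A)) := by rw [dev_sub]
    have h3 : n - fnorm (dev B) ≤ fnorm (dev B - dev A) := by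
      rw [fnorm_eq_norm, hn, fnorm_eq_norm, fnorm_eq_norm, eMat_sub]
      have := norm_sub_norm_le (eMat (dev A)) (eMat (dev B))
      have hswap : ‖eMat (dev A) - eMat (dev B)‖ = ‖eMat (dev B) - eMat (dev A)‖ :=
        norm_sub_rev _ _
      linarith
    linarith
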